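/- Let τ be a primitive substitution with fixed point X, u a non-empty prefix of X, v a non-empty prefix of the derived sequence D_u(X), and w = Θ_{X,u}(v)·u. Then w is a prefix of X, Θ_{X,u} ∘ Θ_{D_u(X),v} = Θ_{X,w}, and D_v(D_u(X)) = D_w(X). -/

import Mathlib

namespace Cobham

open Filter

variable {A : Type*} {B : Type*}

/-- The factor `X_i X_{i+1} ... X_{i+n-1}` of the sequence `X`. -/
def word (X : ℕ → A) (i n : ℕ) : List A := (List.range n).map fun k => X (i + k)

/-- `u` occurs in `X` at position `i`. -/
def OccursAt (X : ℕ → A) (u : List A) (i : ℕ) : Prop := word X i u.length = u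

def IsFactor (X : ℕ → A) (u : List A) : Prop := ∃ i, OccursAt X u i

def IsPrefix (X : ℕ → A) (u : List A) : Prop := OccursAt X u 0

/-- Uniformly recurrent: gaps between successive occurrences of any factor are bounded. -/
def UnifRec (X : ℕ → A) : Prop :=
  ∀ u, IsFactor X u → ∃ g : ℕ, ∀ i : ℕ, ∃ j, i ≤ j ∧ j ≤ i + g ∧ OccursAt X u j

/-- Return words on `u`: factors between two successive occurrences of `u` in `X`. -/
def ReturnWords (X : ℕ → A) (u : List A) : Set (List A) :=
  { v | ∃ i j, OccursAt X u i ∧ OccursAt X u j ∧ i < j ∧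
      (∀ k, i < k → k < j → ¬ OccursAt X u k) ∧ v = word X i (j - i) }

/-- Application of a morphism to a word, by concatenation. -/
def wordApply (σ : A → List B) (w : List A) : List B := w.flatMap σ

/-- Iterate of a morphism. -/
def mPow (σ : A → List A) : ℕ → A → List A
  | 0 => fun a => [a]
  | k + 1 => fun a => wordApply σ (mPow σ k a)

def Nonerasing (σ : A → List A) : Prop := ∀ a, σ a ≠ []

/-- Primitivity: some power of the morphism maps every letter to a word
containing every letter. -/
def Primitive (σ : A → List A) : Prop := ∃ k, 0 < k ∧ ∀ a b : A, b ∈ mPow σ k a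

/-- Primitivity restricted to a set of letters. -/
def PrimitiveOn (σ : A → List A) (S : Set A) : Prop :=
  ∃ k, 0 < k ∧ ∀ a ∈ S, ∀ b ∈ S, b ∈ mPow σ k a

/-- `X` is a fixed point of `σ`: the image of every prefix of `X` is a prefix of `X`. -/
def IsFixedPt (σ : A → List A) (X : ℕ → A) : Prop :=
  ∀ n, OccursAt X (wordApply σ (word X 0 n)) 0

def UltPeriodic (X : ℕ → A) : Prop :=
  ∃ N p : ℕ, 0 < p ∧ ∀ n, N ≤ n → X (n + p) = X n

def Periodic (X : ℕ → A) : Prop := ∃ p : ℕ, 0 < p ∧ ∀ n, X (n + p) = X n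

/-- `u` occurs at position `i` inside the word `w`. -/
def WOcc (u w : List A) (i : ℕ) : Prop :=
  i + u.length ≤ w.length ∧ (w.drop i).take u.length = u

/-- `D` is the derived sequence of `X` on `u`: a sequence of return words on `u`
whose concatenation is `X`. -/
def IsDerived (X : ℕ → A) (u : List A) (D : ℕ → List A) : Prop :=
  (∀ n, D n ∈ ReturnWords X u) ∧ ∀ n, OccursAt X ((word D 0 n).flatten) 0

/-- `τu` is the return substitution of `τ` on `u` (on the alphabet of return words):
`Θ_u ∘ τ_u = τ ∘ Θ_u`. -/
def RetSub (τ : A → List A) (X : ℕ → A) (u : List A)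
    (τu : List A → List (List A)) : Prop :=
  ∀ r ∈ ReturnWords X u,
    (∀ s ∈ τu r, s ∈ ReturnWords X u) ∧ (τu r).flatten = wordApply τ r

/-- Eigenvalue of a complex matrix. -/
def IsEig {n : Type*} [Fintype n] (M : Matrix n n ℂ) (μ : ℂ) : Prop :=
  ∃ v : n → ℂ, v ≠ 0 ∧ M.mulVec v = μ • v

/-- Incidence matrix of a morphism, as a complex matrix. -/
def incMat [Fintype A] [DecidableEq A] (σ : A → List A) : Matrix A A ℂ :=
  Matrix.of fun i j => (((σ j).count i : ℕ) : ℂ)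

/-- Incidence matrix of a return substitution, indexed by the set of return words. -/
def retMat [DecidableEq A] (τu : List A → List (List A)) (S : Set (List A))
    [Fintype S] : Matrix S S ℂ :=
  Matrix.of fun i j => (((τu (j : List A)).count (i : List A) : ℕ) : ℂ)

/-- `α` is the dominant eigenvalue of the incidence matrix of `σ`. -/
def IsDomEig [Fintype A] [DecidableEq A] (σ : A → List A) (α : ℝ) : Prop :=
  IsEig (incMat σ) (α : ℂ) ∧ ∀ μ : ℂ, IsEig (incMat σ) μ → ‖μ‖ ≤ α

/-- `X` is `α`-substitutive: the image under a letter-to-letter morphism of the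
fixed point of a primitive substitution with dominant eigenvalue `α`. -/
def IsSubstitutiveWith {A : Type*} (α : ℝ) (X : ℕ → A) : Prop :=
  ∃ (C : Type) (hF : Fintype C) (hD : DecidableEq C) (σ : C → List C) (c : C)
    (Y : ℕ → C) (ψ : C → A),
    Nonerasing σ ∧ (σ c).head? = some c ∧ Primitive σ ∧
    Y 0 = c ∧ IsFixedPt σ Y ∧ (∀ n, X n = ψ (Y n)) ∧ @IsDomEig C hF hD σ α

/-- Perron number: a real algebraic integer `α ≥ 1` strictly dominating the
absolute values of its other conjugates. -/
def IsPerron (α : ℝ) : Prop :=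
  1 ≤ α ∧ IsIntegral ℤ α ∧
    ∀ β : ℂ, Polynomial.aeval β (minpoly ℤ α) = 0 → β ≠ (α : ℂ) → ‖β‖ < α


/-! ### Auxiliary lemmas for stmt18 -/

section Aux18

variable {X : ℕ → A} {u : List A} {D : ℕ → List A}

lemma word_length (X : ℕ → A) (i n : ℕ) : (word X i n).length = n := by
  simp [word]

lemma word_zero (X : ℕ → A) (i : ℕ) : word X i 0 = [] := by simp [word]

lemma word_one (X : ℕ → A) (i : ℕ) : word X i 1 = [X i] := by simp [word, List.range_succ]

lemma word_append (X : ℕ → A) (i m n : ℕ) :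
    word X i (m + n) = word X i m ++ word X (i + m) n := by
  simp only [word, List.range_add, List.map_append, List.map_map]
  congr 1
  apply List.map_congr_left
  intro k _
  simp [Function.comp, Nat.add_assoc]

lemma word_succ (X : ℕ → A) (i n : ℕ) :
    word X i (n + 1) = word X i n ++ [X (i + n)] := by
  rw [word_append, word_one]

lemma word_take (X : ℕ → A) (i : ℕ) {k n : ℕ} (h : k ≤ n) :
    (word X i n).take k = word X i k := by
  obtain ⟨m, rfl⟩ := Nat.exists_eq_add_of_le h
  rw [word_append]
  exact List.take_left' (word_length X i k)

lemma word_drop (X : ℕ → A) (i : ℕ) {k n : ℕ} (h : k ≤ n) :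
    (word X i n).drop k = word X (i + k) (n - k) := by
  obtain ⟨m, rfl⟩ := Nat.exists_eq_add_of_le h
  rw [word_append]
  rw [List.drop_left' (word_length X i k)]
  congr 1
  omega

/-- Extract a sub-window from an occurrence. -/
lemma word_of_occ {z : List A} {i : ℕ} (hz : OccursAt X z i) {t k : ℕ}
    (h : t + k ≤ z.length) : word X (i + t) k = (z.drop t).take k := by
  have : z = word X i z.length := hz.symm
  rw [this, word_drop X i (by omega), word_take X (i + t) (by omega)]

lemma occursAt_of_prefix {i N : ℕ} (h : u <+: word X i N)
    (hN : u.length ≤ N) : OccursAt X u i := by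
  have := List.prefix_iff_eq_take.mp h
  rw [OccursAt, ← word_take X i hN, ← this]

lemma prefix_word_of_occ {i : ℕ} (h : OccursAt X u i) (N : ℕ) (hN : u.length ≤ N) :
    u <+: word X i N := by
  rw [List.prefix_iff_eq_take, word_take X i hN]
  exact h.symm

lemma occ_self (X : ℕ → A) (i N : ℕ) : OccursAt X (word X i N) i := by
  rw [OccursAt, word_length]

lemma ret_key {r : List A} (hr : r ∈ ReturnWords X u) :
    ∃ i, r ++ u = word X i (r.length + u.length) ∧ OccursAt X u i ∧
      (∀ t, 0 < t → t < r.length → ¬ OccursAt X u (i + t)) ∧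
      OccursAt X u (i + r.length) ∧ r ≠ [] := by
  obtain ⟨i, j, hi, hj, hij, hbet, rfl⟩ := hr
  have hlen : (word X i (j - i)).length = j - i := word_length X i (j - i)
  have hij' : i + (j - i) = j := by omega
  refine ⟨i, ?_, hi, ?_, ?_, ?_⟩
  · rw [word_append, hlen, hij', hj]
  · intro t ht1 ht2 hocc
    exact hbet (i + t) (by omega) (by omega) hocc
  · rw [hlen, hij']; exact hj
  · intro h
    rw [h] at hlen; simp at hlen; omega

lemma ret_ne {r : List A} (hr : r ∈ ReturnWords X u) : r ≠ [] :=
  (ret_key hr).choose_spec.2.2.2.2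

lemma ret_pref {r : List A} (hr : r ∈ ReturnWords X u) : u <+: r ++ u := by
  obtain ⟨i, hw, hi, _, _, _⟩ := ret_key hr
  rw [hw]
  exact prefix_word_of_occ hi _ (by omega)

lemma ret_occ {r : List A} (hr : r ∈ ReturnWords X u) {t : ℕ}
    (ht : t + u.length ≤ r.length + u.length)
    (hslice : ((r ++ u).drop t).take u.length = u) : t = 0 ∨ t = r.length := by
  obtain ⟨i, hw, hi, hbet, hend, hne⟩ := ret_key hr
  have hocc : OccursAt X u (i + t) := by
    have h1 : word X (i + t) u.length = ((r ++ u).drop t).take u.length := by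
      have := word_of_occ (occ_self X i (r.length + u.length)) (t := t) (k := u.length)
        (by rw [word_length]; omega)
      rw [this, hw]
    rw [OccursAt, h1, hslice]
  rcases Nat.eq_zero_or_pos t with h | h
  · exact Or.inl h
  · rcases Nat.lt_or_ge t r.length with h2 | h2
    · exact absurd hocc (hbet t h h2)
    · right; omega

lemma prefix_glue {a z : List A} (h1 : u <+: a ++ u) (h2 : u <+: z) :
    u <+: a ++ z := by
  have htake := List.prefix_iff_eq_take.mp h1
  rw [List.take_append] at htake
  rcases le_or_gt u.length a.length with h | h
  · have : u.length - a.length = 0 := by omega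
    rw [this, List.take_zero, List.append_nil] at htake
    exact (htake ▸ List.take_prefix _ _).trans (List.prefix_append a z)
  · have ha : a.take u.length = a := List.take_of_length_le (by omega)
    rw [ha] at htake
    have hp : u.take (u.length - a.length) <+: z := (List.take_prefix _ _).trans h2
    obtain ⟨q, hq⟩ := hp
    exact ⟨q, by rw [htake, List.append_assoc, hq]⟩

lemma prefix_flatten {l : List (List A)} (hl : ∀ e ∈ l, u <+: e ++ u) :
    u <+: l.flatten ++ u := by
  induction l with
  | nil => simp
  | cons a t ih =>
    rw [List.flatten_cons, List.append_assoc]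
    exact prefix_glue (hl a (List.mem_cons_self))
      (ih fun e he => hl e (List.mem_cons_of_mem a he))

lemma take_drop_of_prefix {p W : List A} (h : p <+: W) {i n : ℕ}
    (hn : i + n ≤ p.length) : (W.drop i).take n = (p.drop i).take n := by
  obtain ⟨q, rfl⟩ := h
  rw [List.drop_append_of_le_length (by omega),
    List.take_append_of_le_length (by rw [List.length_drop]; omega)]

lemma mem_word {e : List A} {D : ℕ → List A} {n k : ℕ} :
    e ∈ word D n k ↔ ∃ j < k, D (n + j) = e := by
  simp [word]

/-- Sum of lengths of the first `n` words of `D`. -/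
def psum (D : ℕ → List A) (n : ℕ) : ℕ := ((word D 0 n).flatten).length

lemma psum_zero (D : ℕ → List A) : psum D 0 = 0 := by simp [psum, word_zero]

lemma psum_succ (D : ℕ → List A) (n : ℕ) :
    psum D (n + 1) = psum D n + (D n).length := by
  simp [psum, word_succ]

lemma psum_add (D : ℕ → List A) (n k : ℕ) :
    psum D (n + k) = psum D n + ((word D n k).flatten).length := by
  induction k with
  | zero => simp [word_zero]
  | succ k ih =>
    rw [← Nat.add_assoc, psum_succ, ih, word_succ]
    simp
    omega

variable (hD : IsDerived X u D)
include hD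

lemma flat_occ (m : ℕ) : word X 0 (psum D m) = (word D 0 m).flatten := hD.2 m

lemma D_ne (n : ℕ) : D n ≠ [] := ret_ne (hD.1 n)

lemma D_len_pos (n : ℕ) : 0 < (D n).length :=
  List.length_pos_iff.mpr (D_ne hD n)

lemma psum_mono : StrictMono (psum D) := by
  apply strictMono_nat_of_lt_succ
  intro n
  rw [psum_succ]
  have := D_len_pos hD n
  omega

lemma psum_ge (n : ℕ) : n ≤ psum D n := by
  induction n with
  | zero => omega
  | succ n ih =>
    have := D_len_pos hD n
    rw [psum_succ]
    omega

lemma flat_len_ge (n k : ℕ) : k ≤ ((word D n k).flatten).length := by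
  induction k with
  | zero => simp
  | succ k ih =>
    rw [word_succ, List.flatten_append]
    simp only [List.flatten_cons, List.flatten_nil, List.append_nil, List.length_append]
    have := D_len_pos hD (n + k)
    omega

lemma word_psum (n k : ℕ) :
    word X (psum D n) (((word D n k).flatten).length) = (word D n k).flatten := by
  have h1 := flat_occ hD (n + k)
  have h2 : word D 0 (n + k) = word D 0 n ++ word D n k := by
    have := word_append D 0 n k
    simpa using this
  have h3 := psum_add D n k
  have h4 : psum D n ≤ psum D (n + k) := by omega
  have h5 : word X (psum D n) (psum D (n + k) - psum D n)
      = (word X 0 (psum D (n + k))).drop (psum D n) := by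
    rw [word_drop X 0 h4]
    simp
  rw [show (((word D n k).flatten).length) = psum D (n + k) - psum D n by omega, h5, h1, h2,
    List.flatten_append]
  exact List.drop_left' rfl

lemma word_D (n : ℕ) : word X (psum D n) (D n).length = D n := by
  have := word_psum hD n 1
  simpa [word_one] using this


lemma entries_ret {n k : ℕ} : ∀ e ∈ word D n k, u <+: e ++ u := by
  intro e he
  obtain ⟨j, _, rfl⟩ := mem_word.mp he
  exact ret_pref (hD.1 (n + j))

lemma u_occ (hpre : IsPrefix X u) (n : ℕ) : OccursAt X u (psum D n) := by
  have hpf : u <+: (word D n u.length).flatten ++ u :=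
    prefix_flatten (entries_ret hD)
  have hlen : u.length ≤ ((word D n u.length).flatten).length :=
    flat_len_ge hD n u.length
  have hpf2 : u <+: (word D n u.length).flatten := by
    have htake := List.prefix_iff_eq_take.mp hpf
    rw [List.take_append_of_le_length hlen] at htake
    exact List.prefix_iff_eq_take.mpr htake
  rw [← word_psum hD n u.length] at hpf2
  exact occursAt_of_prefix hpf2 hlen

lemma exists_window (p : ℕ) : ∃ n, psum D n ≤ p ∧ p < psum D (n + 1) := by
  have hex : ∃ n, p < psum D n := ⟨p + 1, by have := psum_ge hD (p + 1); omega⟩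
  obtain ⟨n, hn1, hn2⟩ : ∃ n, p < psum D n ∧ ∀ m < n, ¬ p < psum D m :=
    ⟨Nat.find hex, Nat.find_spec hex, fun m hm => Nat.find_min hex hm⟩
  match n, hn1, hn2 with
  | 0, hn1, _ => simp [psum_zero] at hn1
  | n + 1, hn1, hn2 =>
    exact ⟨n, by have := hn2 n (by omega); omega, hn1⟩

lemma occ_u_eq (hpre : IsPrefix X u) {p : ℕ} (hp : OccursAt X u p) :
    ∃ n, p = psum D n := by
  obtain ⟨n, h1, h2⟩ := exists_window hD p
  rw [psum_succ] at h2
  set t := p - psum D n with ht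
  have hDn1 : word X (psum D n) ((D n).length + u.length) = D n ++ u := by
    rw [word_append, word_D hD]
    congr 1
    have h3 := u_occ hD hpre (n + 1)
    rw [OccursAt, psum_succ] at h3
    exact h3
  have hs : ((D n ++ u).drop t).take u.length = u := by
    have := word_of_occ (occ_self X (psum D n) ((D n).length + u.length))
      (t := t) (k := u.length) (by rw [word_length]; omega)
    rw [hDn1] at this
    rw [← this, show psum D n + t = p by omega]
    exact hp
  rcases ret_occ (hD.1 n) (by omega) hs with h | h
  · exact ⟨n, by omega⟩
  · omega

section W

variable {v : List (List A)} (hpre : IsPrefix X u) (hvpre : IsPrefix D v)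
include hvpre

lemma vflat_eq : word X 0 (psum D v.length) = v.flatten := by
  rw [flat_occ hD, show word D 0 v.length = v from hvpre]

lemma vflat_len : v.flatten.length = psum D v.length := by
  rw [← vflat_eq hD hvpre, word_length]

include hpre in
lemma w_pref : OccursAt X (v.flatten ++ u) 0 := by
  rw [OccursAt, List.length_append, vflat_len hD hvpre, word_append]
  congr 1
  · exact vflat_eq hD hvpre
  · simpa [OccursAt] using u_occ hD hpre v.length

include hpre in
lemma transfer {p : ℕ} (hocc : OccursAt X (v.flatten ++ u) p) {a b : ℕ}
    (hab : a + b ≤ psum D v.length + u.length) :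
    word X (p + a) b = word X a b := by
  have h0 := w_pref hD hpre hvpre
  have hlen : a + b ≤ (v.flatten ++ u).length := by
    rw [List.length_append, vflat_len hD hvpre]; omega
  have e1 := word_of_occ hocc hlen
  have e2 := word_of_occ h0 hlen
  rw [Nat.zero_add] at e2
  rw [e1, ← e2]

include hpre in
lemma occ_w_iff {p : ℕ} :
    OccursAt X (v.flatten ++ u) p ↔ ∃ n, p = psum D n ∧ word D n v.length = v := by
  constructor
  · intro hocc
    have hu2 : OccursAt X u p := by
      have h1 := transfer hD hpre hvpre hocc (a := 0) (b := u.length) (by omega)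
      rw [Nat.add_zero] at h1
      rw [OccursAt, h1]
      exact hpre
    obtain ⟨n, rfl⟩ := occ_u_eq hD hpre hu2
    have key : ∀ k, k ≤ v.length → psum D (n + k) = psum D n + psum D k := by
      intro k hk
      induction k with
      | zero => simp [psum_zero]
      | succ k ih =>
        have ihk := ih (by omega)
        have hk1 : psum D (k + 1) ≤ psum D v.length := (psum_mono hD).monotone hk
        have hkk : psum D k < psum D (k + 1) := psum_mono hD (by omega)
        have ho1 : OccursAt X u (psum D n + psum D (k + 1)) := by
          rw [OccursAt, transfer hD hpre hvpre hocc (by omega)]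
          exact u_occ hD hpre (k + 1)
        obtain ⟨j, hj⟩ := occ_u_eq hD hpre ho1
        have hj2 : n + k < j := by
          by_contra hcon
          push_neg at hcon
          have := (psum_mono hD).monotone hcon
          omega
        have hge : psum D (n + k + 1) ≤ psum D n + psum D (k + 1) := by
          rw [hj]
          exact (psum_mono hD).monotone hj2
        have hle : psum D n + psum D (k + 1) ≤ psum D (n + k + 1) := by
          by_contra hcon
          push_neg at hcon
          set t := psum D (n + k + 1) - (psum D n + psum D k) with htdef
          have hsn := psum_succ D (n + k)
          have hsk := psum_succ D k
          have hdp := D_len_pos hD (n + k)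
          have ht1 : 0 < t := by omega
          have ht2 : t < (D k).length := by omega
          have hz : word X (psum D k) ((D k).length + u.length) = D k ++ u := by
            rw [word_append, word_D hD]
            congr 1
            have h3 := u_occ hD hpre (k + 1)
            rw [OccursAt, psum_succ] at h3
            exact h3
          have hocc2 : OccursAt X u (psum D (n + k + 1)) := u_occ hD hpre _
          have hs : ((D k ++ u).drop t).take u.length = u := by
            have e := word_of_occ (occ_self X (psum D k) ((D k).length + u.length))
              (t := t) (k := u.length) (by rw [word_length]; omega)
            rw [hz] at e
            rw [← e]
            have e2 := transfer hD hpre hvpre hocc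
              (a := psum D k + t) (b := u.length) (by omega)
            rw [← e2, show psum D n + (psum D k + t) = psum D (n + k + 1) by omega]
            exact hocc2
          rcases ret_occ (hD.1 k) (by omega) hs with h | h <;> omega
        show psum D (n + k + 1) = psum D n + psum D (k + 1)
        omega
    have hDk : ∀ k, k < v.length → D (n + k) = D k := by
      intro k hk
      have h1 := key k (le_of_lt hk)
      have h2 : psum D (n + k + 1) = psum D n + psum D (k + 1) := key (k + 1) hk
      have hs1 := psum_succ D (n + k)
      have hs2 := psum_succ D k
      have hlen : (D (n + k)).length = (D k).length := by omega
      have e1 : D (n + k) = word X (psum D (n + k)) (D (n + k)).length :=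
        (word_D hD (n + k)).symm
      have hk1 : psum D (k + 1) ≤ psum D v.length := (psum_mono hD).monotone hk
      rw [e1, hlen, h1,
        transfer hD hpre hvpre hocc (a := psum D k) (b := (D k).length) (by omega)]
      exact word_D hD k
    refine ⟨n, rfl, ?_⟩
    have heq : word D n v.length = word D 0 v.length := by
      apply List.ext_getElem (by rw [word_length, word_length])
      intro i h1 h2
      simp only [word, List.getElem_map, List.getElem_range, Nat.zero_add]
      exact hDk i (by rw [word_length] at h2; simpa using h2)
    rw [heq]
    exact hvpre
  · rintro ⟨n, rfl, hvn⟩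
    have h1 := word_psum hD n v.length
    rw [hvn] at h1
    have h2 : psum D (n + v.length) = psum D n + v.flatten.length := by
      rw [psum_add, hvn]
    have h3 := u_occ hD hpre (n + v.length)
    rw [OccursAt] at h3
    rw [OccursAt, List.length_append, word_append, h1,
      show psum D n + v.flatten.length = psum D (n + v.length) from by omega, h3]

end W

section Final

variable {v : List (List A)} (hpre : IsPrefix X u) (hvpre : IsPrefix D v)

lemma flat_ret_word (n k : ℕ) :
    (word D n k).flatten = word X (psum D n) (psum D (n + k) - psum D n) := by
  have h1 := word_psum hD n k
  have h2 := psum_add D n k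
  rw [show ((word D n k).flatten).length = psum D (n + k) - psum D n by omega] at h1
  exact h1.symm

include hpre hvpre in
lemma maps_to_ret : ∀ r ∈ ReturnWords D v, r.flatten ∈ ReturnWords X (v.flatten ++ u) := by
  rintro r ⟨n, n', hn, hn', hlt, hbet, rfl⟩
  refine ⟨psum D n, psum D n', ?_, ?_, psum_mono hD hlt, ?_, ?_⟩
  · exact (occ_w_iff hD hpre hvpre).mpr ⟨n, rfl, hn⟩
  · exact (occ_w_iff hD hpre hvpre).mpr ⟨n', rfl, hn'⟩
  · intro q hq1 hq2 hqocc
    obtain ⟨j, rfl, hj⟩ := (occ_w_iff hD hpre hvpre).mp hqocc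
    exact hbet j ((psum_mono hD).lt_iff_lt.mp hq1) ((psum_mono hD).lt_iff_lt.mp hq2) hj
  · rw [flat_ret_word hD n (n' - n), show n + (n' - n) = n' by omega]

include hpre hvpre in
lemma surj_on_ret : ∀ s ∈ ReturnWords X (v.flatten ++ u),
    ∃ r ∈ ReturnWords D v, r.flatten = s := by
  rintro s ⟨p, p', hp, hp', hlt, hbet, rfl⟩
  obtain ⟨n, rfl, hn⟩ := (occ_w_iff hD hpre hvpre).mp hp
  obtain ⟨n', rfl, hn'⟩ := (occ_w_iff hD hpre hvpre).mp hp'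
  have hnn : n < n' := (psum_mono hD).lt_iff_lt.mp hlt
  refine ⟨word D n (n' - n), ⟨n, n', hn, hn', hnn, ?_, rfl⟩, ?_⟩
  · intro j hj1 hj2 hjocc
    exact hbet (psum D j) (psum_mono hD hj1) (psum_mono hD hj2)
      ((occ_w_iff hD hpre hvpre).mpr ⟨j, rfl, hjocc⟩)
  · rw [flat_ret_word hD n (n' - n), show n + (n' - n) = n' by omega]

omit hD in
lemma head_eq {a a' : List A} {y y' : List (List A)}
    (ha : a ∈ ReturnWords X u) (ha' : a' ∈ ReturnWords X u)
    (hy : ∀ e ∈ y, e ∈ ReturnWords X u) (hy' : ∀ e ∈ y', e ∈ ReturnWords X u)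
    (hp : a <+: a') (heq : a ++ y.flatten = a' ++ y'.flatten) : a = a' := by
  have hpy : u <+: y.flatten ++ u := prefix_flatten fun e he => ret_pref (hy e he)
  have hpy' : u <+: y'.flatten ++ u := prefix_flatten fun e he => ret_pref (hy' e he)
  have hW : a ++ (y.flatten ++ u) = a' ++ (y'.flatten ++ u) := by
    rw [← List.append_assoc, ← List.append_assoc, heq]
  have h1 : a' ++ u <+: a ++ (y.flatten ++ u) := by
    obtain ⟨q, hq⟩ := hpy'
    exact ⟨q, by rw [hW, ← hq, List.append_assoc]⟩
  have hle := hp.length_le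
  have hslice : ((a' ++ u).drop a.length).take u.length = u := by
    have h2 := take_drop_of_prefix h1 (i := a.length) (n := u.length)
      (by rw [List.length_append]; omega)
    rw [← h2, List.drop_left]
    exact (List.prefix_iff_eq_take.mp hpy).symm
  rcases ret_occ ha' (by omega) hslice with h | h
  · exact absurd (List.length_eq_zero_iff.mp h) (ret_ne ha)
  · exact hp.eq_of_length h

omit hD in
lemma flat_inj : ∀ (l l' : List (List A)), (∀ e ∈ l, e ∈ ReturnWords X u) →
    (∀ e ∈ l', e ∈ ReturnWords X u) → l.flatten = l'.flatten → l = l' := by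
  intro l
  induction l with
  | nil =>
    intro l' _ hl' heq
    cases l' with
    | nil => rfl
    | cons a t =>
      exfalso
      simp only [List.flatten_nil, List.flatten_cons] at heq
      exact ret_ne (hl' a (List.mem_cons_self)) (List.append_eq_nil_iff.mp heq.symm).1
  | cons a t ih =>
    intro l' hl hl' heq
    cases l' with
    | nil =>
      exfalso
      simp only [List.flatten_nil, List.flatten_cons] at heq
      exact ret_ne (hl a (List.mem_cons_self)) (List.append_eq_nil_iff.mp heq).1
    | cons a' t' =>
      simp only [List.flatten_cons] at heq
      have ha : a ∈ ReturnWords X u := hl a (List.mem_cons_self)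
      have ha' : a' ∈ ReturnWords X u := hl' a' (List.mem_cons_self)
      have hte : ∀ e ∈ t, e ∈ ReturnWords X u := fun e he => hl e (List.mem_cons_of_mem a he)
      have hte' : ∀ e ∈ t', e ∈ ReturnWords X u := fun e he => hl' e (List.mem_cons_of_mem a' he)
      have hpp : a <+: a' ∨ a' <+: a :=
        List.prefix_or_prefix_of_prefix ⟨t.flatten, heq⟩ (List.prefix_append a' t'.flatten)
      have haa : a = a' := by
        rcases hpp with hp | hp
        · exact head_eq ha ha' hte hte' hp heq
        · exact (head_eq ha' ha hte' hte hp heq.symm).symm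
      subst haa
      have hflat : t.flatten = t'.flatten := by simpa using heq
      rw [ih t' hte hte' hflat]

lemma ret_entries {r : List (List A)} (hr : r ∈ ReturnWords D v) :
    ∀ e ∈ r, e ∈ ReturnWords X u := by
  obtain ⟨n, n', _, _, _, _, rfl⟩ := hr
  intro e he
  obtain ⟨j, _, rfl⟩ := mem_word.mp he
  exact hD.1 (n + j)

end Final

end Aux18

theorem stmt18 {A : Type*} (X : ℕ → A) (hX : UnifRec X)
    (u : List A) (hu : u ≠ []) (hpre : IsPrefix X u)
    (D : ℕ → List A) (hD : IsDerived X u D)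
    (v : List (List A)) (hv : v ≠ []) (hvpre : IsPrefix D v) :
    IsPrefix X (v.flatten ++ u) ∧
    Set.BijOn List.flatten (ReturnWords D v) (ReturnWords X (v.flatten ++ u)) ∧
    ∀ E : ℕ → List (List A), IsDerived D v E →
      IsDerived X (v.flatten ++ u) (fun n => (E n).flatten) := by
  refine ⟨w_pref hD hpre hvpre, ⟨?_, ?_, ?_⟩, ?_⟩
  · exact fun r hr => maps_to_ret hD hpre hvpre r hr
  · intro r hr r' hr' heq
    exact flat_inj r r' (ret_entries hD hr) (ret_entries hD hr') heq
  · intro s hs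
    obtain ⟨r, hr, hrf⟩ := surj_on_ret hD hpre hvpre s hs
    exact ⟨r, hr, hrf⟩
  · intro E hE
    refine ⟨fun n => maps_to_ret hD hpre hvpre (E n) (hE.1 n), fun n => ?_⟩
    have hP : word D 0 ((word E 0 n).flatten).length = (word E 0 n).flatten := hE.2 n
    have h3 := hD.2 ((word E 0 n).flatten).length
    rw [hP] at h3
    have h1 : word (fun k => (E k).flatten) 0 n = (word E 0 n).map List.flatten := by
      simp [word, List.map_map]
    rw [h1, ← List.flatten_flatten]
    exact h3

end Cobham
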